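/- Let T : X → Y be a bounded linear operator between Banach spaces. Then cc_DP(T) ≤ cc(T) ≤ 2·cc_DP(T). -/

import Mathlib

open Filter Metric Set NormedSpace
open scoped Topology

noncomputable section

/-- The non-symmetrized Hausdorff distance `d̂(A,B) = sup_{a ∈ A} dist(a, B)`,
formulated with an abstract distance function `d`. -/
def hdD {Z : Type*} (d : Z → Z → ℝ) (A B : Set Z) : ℝ :=
  ⨆ a : A, ⨅ b : B, d a b

/-- `χ₀(A) = inf { d̂(A,F) : F ⊆ A finite nonempty }`. -/
def chi0D {Z : Type*} (d : Z → Z → ℝ) (A : Set Z) : ℝ :=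
  sInf {r | ∃ F : Set Z, F ⊆ A ∧ F.Finite ∧ F.Nonempty ∧ r = hdD d A F}

/-- A subset of a normed space is weakly compact if it is compact in the weak topology. -/
def IsWeaklyCompact (𝕜 : Type*) [RCLike 𝕜] {Z : Type*} [NormedAddCommGroup Z]
    [NormedSpace 𝕜 Z] (K : Set Z) : Prop :=
  IsCompact (toWeakSpace 𝕜 Z '' K)

/-- `ca((x_k)) = inf_n sup { ‖x_k - x_l‖ : k, l ≥ n }`, the measure of
non-Cauchyness of a sequence. -/
def caSeq {Z : Type*} [SeminormedAddGroup Z] (x : ℕ → Z) : ℝ :=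
  ⨅ n : ℕ, ⨆ p : {p : ℕ × ℕ // n ≤ p.1 ∧ n ≤ p.2}, ‖x (p : ℕ × ℕ).1 - x (p : ℕ × ℕ).2‖

/-- A sequence is weakly Cauchy if every continuous linear functional sends it
to a Cauchy scalar sequence. -/
def WeaklyCauchy (𝕜 : Type*) [RCLike 𝕜] {X : Type*} [NormedAddCommGroup X]
    [NormedSpace 𝕜 X] (x : ℕ → X) : Prop :=
  ∀ φ : StrongDual 𝕜 X, CauchySeq fun k => φ (x k)

/-- `cc(T)`, the measure of non-complete-continuity of an operator `T`. -/
def ccOp (𝕜 : Type*) [RCLike 𝕜] {X Y : Type*} [NormedAddCommGroup X] [NormedSpace 𝕜 X]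
    [NormedAddCommGroup Y] [NormedSpace 𝕜 Y] (T : X →L[𝕜] Y) : ℝ :=
  sSup {r | ∃ x : ℕ → X, (∀ k, x k ∈ closedBall (0 : X) 1) ∧ WeaklyCauchy 𝕜 x ∧
    r = caSeq fun k => T (x k)}

/-- `cc_DP(T) = sup { χ₀(T(L)) : L ⊆ B_X weakly compact }`. -/
def ccDP (𝕜 : Type*) [RCLike 𝕜] {X Y : Type*} [NormedAddCommGroup X] [NormedSpace 𝕜 X]
    [NormedAddCommGroup Y] [NormedSpace 𝕜 Y] (T : X →L[𝕜] Y) : ℝ :=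
  sSup {r | ∃ L : Set X, L.Nonempty ∧ L ⊆ closedBall (0 : X) 1 ∧ IsWeaklyCompact 𝕜 L ∧
    r = chi0D dist (T '' L)}

/-! ### Auxiliary lemmas -/

section RealBounds

variable {Z : Type*} [NormedAddCommGroup Z]

lemma hdD_nonneg {A B : Set Z} : 0 ≤ hdD dist A B :=
  Real.iSup_nonneg fun _ => Real.iInf_nonneg fun _ => dist_nonneg

lemma chi0D_set_bddBelow (A : Set Z) :
    BddBelow {r | ∃ F : Set Z, F ⊆ A ∧ F.Finite ∧ F.Nonempty ∧ r = hdD dist A F} := by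
  refine ⟨0, ?_⟩
  rintro r ⟨F, _, _, _, rfl⟩
  exact hdD_nonneg

lemma chi0D_nonneg (A : Set Z) : 0 ≤ chi0D dist A := by
  apply Real.sInf_nonneg
  rintro r ⟨F, _, _, _, rfl⟩
  exact hdD_nonneg

lemma iInf_dist_bddBelow (a : Z) (B : Set Z) : BddBelow (Set.range fun b : B => dist a (b : Z)) := by
  refine ⟨0, ?_⟩
  rintro r ⟨b, rfl⟩
  exact dist_nonneg

lemma hdD_le_two_R {A B : Set Z} {R : ℝ} (hR : 0 ≤ R) (hA : ∀ a ∈ A, ‖a‖ ≤ R)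
    {b₀ : Z} (hb₀ : b₀ ∈ B) (hb : ‖b₀‖ ≤ R) : hdD dist A B ≤ 2 * R := by
  refine Real.iSup_le (fun a => ?_) (by positivity)
  refine le_trans (ciInf_le (iInf_dist_bddBelow _ _) ⟨b₀, hb₀⟩) ?_
  calc dist (a : Z) b₀ ≤ ‖(a : Z)‖ + ‖b₀‖ := by
        rw [dist_eq_norm]; exact norm_sub_le _ _
  _ ≤ R + R := add_le_add (hA a a.2) hb
  _ = 2 * R := by ring

lemma chi0D_le_two_R {A : Set Z} {R : ℝ} (hR : 0 ≤ R) (hA : ∀ a ∈ A, ‖a‖ ≤ R)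
    {a₀ : Z} (ha₀ : a₀ ∈ A) : chi0D dist A ≤ 2 * R := by
  have hmem : hdD dist A {a₀} ∈
      {r | ∃ F : Set Z, F ⊆ A ∧ F.Finite ∧ F.Nonempty ∧ r = hdD dist A F} :=
    ⟨{a₀}, Set.singleton_subset_iff.mpr ha₀, Set.finite_singleton _, Set.singleton_nonempty _, rfl⟩
  refine le_trans (csInf_le (chi0D_set_bddBelow A) hmem) ?_
  exact hdD_le_two_R hR hA (Set.mem_singleton a₀) (hA a₀ ha₀)

lemma caSeq_nonneg (x : ℕ → Z) : 0 ≤ caSeq x :=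
  Real.iInf_nonneg fun _ => Real.iSup_nonneg fun _ => norm_nonneg _

lemma caSeq_sup_bddBelow (x : ℕ → Z) : BddBelow (Set.range fun n : ℕ =>
    ⨆ p : {p : ℕ × ℕ // n ≤ p.1 ∧ n ≤ p.2}, ‖x (p : ℕ × ℕ).1 - x (p : ℕ × ℕ).2‖) := by
  refine ⟨0, ?_⟩
  rintro r ⟨n, rfl⟩
  exact Real.iSup_nonneg fun _ => norm_nonneg _

lemma caSeq_pair_bddAbove {x : ℕ → Z} {R : ℝ} (hx : ∀ k, ‖x k‖ ≤ R) (n : ℕ) :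
    BddAbove (Set.range fun p : {p : ℕ × ℕ // n ≤ p.1 ∧ n ≤ p.2} =>
      ‖x (p : ℕ × ℕ).1 - x (p : ℕ × ℕ).2‖) := by
  refine ⟨2 * R, ?_⟩
  rintro r ⟨p, rfl⟩
  calc ‖x (p : ℕ × ℕ).1 - x (p : ℕ × ℕ).2‖ ≤ ‖x (p : ℕ × ℕ).1‖ + ‖x (p : ℕ × ℕ).2‖ :=
        norm_sub_le _ _
  _ ≤ 2 * R := by have := hx (p : ℕ × ℕ).1; have := hx (p : ℕ × ℕ).2; linarith

lemma caSeq_le_two_R {x : ℕ → Z} {R : ℝ} (hR : 0 ≤ R) (hx : ∀ k, ‖x k‖ ≤ R) :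
    caSeq x ≤ 2 * R := by
  refine le_trans (ciInf_le (caSeq_sup_bddBelow x) 0) ?_
  refine Real.iSup_le (fun p => ?_) (by positivity)
  calc ‖x (p : ℕ × ℕ).1 - x (p : ℕ × ℕ).2‖ ≤ ‖x (p : ℕ × ℕ).1‖ + ‖x (p : ℕ × ℕ).2‖ :=
        norm_sub_le _ _
  _ ≤ 2 * R := by have := hx (p : ℕ × ℕ).1; have := hx (p : ℕ × ℕ).2; linarith

lemma le_caSeq {x : ℕ → Z} {R c : ℝ} (hx : ∀ k, ‖x k‖ ≤ R)
    (h : ∀ n, ∃ k l, n ≤ k ∧ n ≤ l ∧ c ≤ ‖x k - x l‖) : c ≤ caSeq x := by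
  refine le_ciInf fun n => ?_
  obtain ⟨k, l, hk, hl, hc⟩ := h n
  exact le_trans hc (le_ciSup (caSeq_pair_bddAbove hx n) ⟨(k, l), hk, hl⟩)

lemma exists_pair_of_lt_caSeq {x : ℕ → Z} {c : ℝ} (h : c < caSeq x) (n : ℕ) :
    ∃ k l, n ≤ k ∧ n ≤ l ∧ c < ‖x k - x l‖ := by
  have h1 : c < ⨆ p : {p : ℕ × ℕ // n ≤ p.1 ∧ n ≤ p.2}, ‖x (p : ℕ × ℕ).1 - x (p : ℕ × ℕ).2‖ :=
    lt_of_lt_of_le h (ciInf_le (caSeq_sup_bddBelow x) n)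
  haveI : Nonempty {p : ℕ × ℕ // n ≤ p.1 ∧ n ≤ p.2} := ⟨⟨(n, n), le_rfl, le_rfl⟩⟩
  obtain ⟨p, hp⟩ := exists_lt_of_lt_ciSup h1
  exact ⟨(p : ℕ × ℕ).1, (p : ℕ × ℕ).2, p.2.1, p.2.2, hp⟩

end RealBounds
theorem mazur {𝕜 X : Type*} [RCLike 𝕜] [NormedAddCommGroup X] [NormedSpace 𝕜 X]
    (M : Submodule 𝕜 X) (hcl : IsClosed (M : Set X)) :
    IsClosed ((toWeakSpace 𝕜 X) '' (M : Set X)) := by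
  letI : NormedSpace ℝ X := NormedSpace.restrictScalars ℝ 𝕜 X
  letI : IsScalarTower ℝ 𝕜 X := ⟨fun r k x => by rw [Algebra.smul_def, mul_smul]; rfl⟩
  have hsR : Convex ℝ (M : Set X) := by
    intro x hx y hy a b _ _ _
    show (algebraMap ℝ 𝕜 a) • x + (algebraMap ℝ 𝕜 b) • y ∈ M
    exact M.add_mem (M.smul_mem _ hx) (M.smul_mem _ hy)
  have h := hsR.toWeakSpace_closure 𝕜
  rw [hcl.closure_eq] at h
  rw [h]
  exact isClosed_closure

/-- Eberlein–Šmulian-lite: a sequence in a weakly compact set has a weakly Cauchy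
(indeed weakly convergent) subsequence. -/
theorem exists_weaklyCauchy_subseq {𝕜 X : Type*} [RCLike 𝕜] [NormedAddCommGroup X]
    [NormedSpace 𝕜 X] {L : Set X} (hL : IsCompact (toWeakSpace 𝕜 X '' L))
    (x : ℕ → X) (hx : ∀ n, x n ∈ L) :
    ∃ s : ℕ → ℕ, StrictMono s ∧ WeaklyCauchy 𝕜 (x ∘ s) := by
  classical
  set M : Submodule 𝕜 X := (Submodule.span 𝕜 (Set.range x)).topologicalClosure with hM
  have hMx : ∀ n, x n ∈ M := fun n =>
    (Submodule.le_topologicalClosure _) (Submodule.subset_span ⟨n, rfl⟩)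
  have hMclosed : IsClosed (M : Set X) := Submodule.isClosed_topologicalClosure _
  -- separability of M
  have hsep : TopologicalSpace.IsSeparable (M : Set X) := by
    have : TopologicalSpace.IsSeparable (Set.range x) :=
      (Set.countable_range x).isSeparable
    exact this.span.closure
  obtain ⟨c, hc_count, hc_sub⟩ := hsep
  have hc_ne : c.Nonempty := by
    rcases Set.eq_empty_or_nonempty c with h | h
    · exfalso
      have : (0 : X) ∈ closure c := hc_sub M.zero_mem
      rw [h] at this
      simp at this
    · exact h
  obtain ⟨v, hv⟩ := Set.Countable.exists_eq_range hc_count hc_ne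
  -- functionals
  have hφ : ∀ i : ℕ, ∃ φ : StrongDual 𝕜 X, v i ≠ 0 → (‖φ‖ = 1 ∧ φ (v i) = (‖v i‖ : 𝕜)) := by
    intro i
    by_cases h : v i = 0
    · exact ⟨0, fun h' => absurd h h'⟩
    · obtain ⟨g, hg1, hg2⟩ := exists_dual_vector 𝕜 (v i) (norm_ne_zero_iff.mpr h)
      exact ⟨g, fun _ => ⟨hg1, hg2⟩⟩
  choose φ hφ using hφ
  -- separation of points of M
  have hseppt : ∀ w : X, w ∈ M → w ≠ 0 → ∃ i, φ i w ≠ 0 := by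
    intro w hw hw0
    have hwc : w ∈ closure c := hc_sub hw
    have hwpos : 0 < ‖w‖ := norm_pos_iff.mpr hw0
    have hpos : 0 < ‖w‖ / 3 := by positivity
    obtain ⟨y, hyc, hyd⟩ := Metric.mem_closure_iff.mp hwc _ hpos
    obtain ⟨i, rfl⟩ : ∃ i, v i = y := by
      rw [hv] at hyc; exact hyc
    have hvlb : 2 * (‖w‖ / 3) ≤ ‖v i‖ := by
      have := norm_sub_norm_le w (v i)
      have h2 : ‖w - v i‖ < ‖w‖ / 3 := by rwa [← dist_eq_norm]
      have : ‖w‖ - ‖v i‖ < ‖w‖/3 := lt_of_le_of_lt (by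
        simpa [norm_sub_rev] using norm_sub_norm_le w (v i)) h2
      linarith
    have hvne : v i ≠ 0 := by
      intro h0
      rw [h0, norm_zero] at hvlb
      have : 0 < ‖w‖ := norm_pos_iff.mpr hw0
      linarith
    obtain ⟨hn1, hn2⟩ := hφ i hvne
    refine ⟨i, fun h0 => ?_⟩
    have : φ i (v i) = φ i (v i - w) := by rw [map_sub, h0, sub_zero]
    have hb : ‖φ i (v i - w)‖ ≤ ‖v i - w‖ := by
      calc ‖φ i (v i - w)‖ ≤ ‖φ i‖ * ‖v i - w‖ := (φ i).le_opNorm _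
      _ = ‖v i - w‖ := by rw [hn1, one_mul]
    rw [← this, hn2] at hb
    have : ‖(‖v i‖ : 𝕜)‖ = ‖v i‖ := by
      rw [RCLike.norm_ofReal, abs_of_nonneg (norm_nonneg _)]
    rw [this] at hb
    have h2 : ‖v i - w‖ < ‖w‖ / 3 := by
      rw [norm_sub_rev, ← dist_eq_norm]; exact hyd
    linarith
  -- the compact set
  set K' : Set (WeakSpace 𝕜 X) :=
    (toWeakSpace 𝕜 X '' L) ∩ (toWeakSpace 𝕜 X '' (M : Set X)) with hK'def
  have hK' : IsCompact K' := hL.inter_right (mazur M hMclosed)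
  haveI : CompactSpace ↥K' := isCompact_iff_compactSpace.mp hK'
  set u : ℕ → ↥K' := fun n =>
    ⟨toWeakSpace 𝕜 X (x n), ⟨Set.mem_image_of_mem _ (hx n), Set.mem_image_of_mem _ (hMx n)⟩⟩
    with hu
  -- the embedding into a metrizable space
  set Φ : ↥K' → (ℕ → 𝕜) := fun w i => φ i ((toWeakSpace 𝕜 X).symm (w : WeakSpace 𝕜 X)) with hΦ
  have hΦcont : Continuous Φ := by
    refine continuous_pi fun i => ?_
    have h1 : Continuous fun w : WeakSpace 𝕜 X => φ i ((toWeakSpace 𝕜 X).symm w) :=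
      WeakBilin.eval_continuous (topDualPairing 𝕜 X).flip (φ i)
    exact h1.comp continuous_subtype_val
  have hΦinj : Function.Injective Φ := by
    intro w w' h
    have haM : (toWeakSpace 𝕜 X).symm (w : WeakSpace 𝕜 X) ∈ M := by
      obtain ⟨z, hzM, hz⟩ := w.2.2
      rw [← hz, LinearEquiv.symm_apply_apply]; exact hzM
    have hbM : (toWeakSpace 𝕜 X).symm (w' : WeakSpace 𝕜 X) ∈ M := by
      obtain ⟨z, hzM, hz⟩ := w'.2.2
      rw [← hz, LinearEquiv.symm_apply_apply]; exact hzM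
    set a := (toWeakSpace 𝕜 X).symm (w : WeakSpace 𝕜 X)
    set b := (toWeakSpace 𝕜 X).symm (w' : WeakSpace 𝕜 X)
    have hab : a = b := by
      by_contra hne
      obtain ⟨i, hi⟩ := hseppt (a - b) (M.sub_mem haM hbM) (sub_ne_zero.mpr hne)
      apply hi
      have := congrFun h i
      simp only [Φ] at this
      rw [map_sub, this, sub_self]
    have : (w : WeakSpace 𝕜 X) = (w' : WeakSpace 𝕜 X) := by
      have := congrArg (toWeakSpace 𝕜 X) hab
      simp only [a, b, LinearEquiv.apply_symm_apply] at this
      exact this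
    exact Subtype.ext this
  have hemb := hΦcont.isClosedEmbedding hΦinj
  haveI : TopologicalSpace.MetrizableSpace ↥K' := hemb.toIsEmbedding.metrizableSpace
  obtain ⟨a, s, hs, hconv⟩ := CompactSpace.tendsto_subseq u
  refine ⟨s, hs, ?_⟩
  intro ψ
  have hcont : Continuous fun w : WeakSpace 𝕜 X => ψ ((toWeakSpace 𝕜 X).symm w) :=
    WeakBilin.eval_continuous (topDualPairing 𝕜 X).flip ψ
  have htd : Tendsto (fun n => ψ ((toWeakSpace 𝕜 X).symm ((u (s n) : WeakSpace 𝕜 X))))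
      atTop (𝓝 (ψ ((toWeakSpace 𝕜 X).symm (a : WeakSpace 𝕜 X)))) :=
    ((hcont.comp continuous_subtype_val).continuousAt.tendsto).comp hconv
  have heq : (fun n => ψ ((toWeakSpace 𝕜 X).symm ((u (s n) : WeakSpace 𝕜 X))))
      = fun k => ψ ((x ∘ s) k) := by
    funext n
    simp [u]
  rw [heq] at htd
  exact htd.cauchySeq
section SetBounds

variable {𝕜 : Type*} [RCLike 𝕜] {X Y : Type*} [NormedAddCommGroup X] [NormedSpace 𝕜 X]
  [NormedAddCommGroup Y] [NormedSpace 𝕜 Y] (T : X →L[𝕜] Y)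

lemma ccDP_set_bddAbove : BddAbove {r | ∃ L : Set X, L.Nonempty ∧ L ⊆ closedBall (0 : X) 1 ∧
    IsWeaklyCompact 𝕜 L ∧ r = chi0D dist (T '' L)} := by
  refine ⟨2 * ‖T‖, ?_⟩
  rintro r ⟨L, hne, hball, _, rfl⟩
  obtain ⟨x₀, hx₀⟩ := hne
  refine chi0D_le_two_R (norm_nonneg T) ?_ (Set.mem_image_of_mem T hx₀)
  rintro a ⟨z, hz, rfl⟩
  calc ‖T z‖ ≤ ‖T‖ * ‖z‖ := T.le_opNorm z
  _ ≤ ‖T‖ * 1 := by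
      have : ‖z‖ ≤ 1 := mem_closedBall_zero_iff.mp (hball hz)
      exact mul_le_mul_of_nonneg_left this (norm_nonneg T)
  _ = ‖T‖ := mul_one _

lemma ccOp_set_bddAbove : BddAbove {r | ∃ x : ℕ → X, (∀ k, x k ∈ closedBall (0 : X) 1) ∧
    WeaklyCauchy 𝕜 x ∧ r = caSeq fun k => T (x k)} := by
  refine ⟨2 * ‖T‖, ?_⟩
  rintro r ⟨x, hball, _, rfl⟩
  refine caSeq_le_two_R (norm_nonneg T) fun k => ?_
  calc ‖T (x k)‖ ≤ ‖T‖ * ‖x k‖ := T.le_opNorm _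
  _ ≤ ‖T‖ * 1 := mul_le_mul_of_nonneg_left (mem_closedBall_zero_iff.mp (hball k)) (norm_nonneg T)
  _ = ‖T‖ := mul_one _

lemma norm_T_apply_le {L : Set X} (hball : L ⊆ closedBall (0 : X) 1) :
    ∀ a ∈ T '' L, ‖a‖ ≤ ‖T‖ := by
  rintro a ⟨z, hz, rfl⟩
  calc ‖T z‖ ≤ ‖T‖ * ‖z‖ := T.le_opNorm z
  _ ≤ ‖T‖ * 1 := mul_le_mul_of_nonneg_left (mem_closedBall_zero_iff.mp (hball hz)) (norm_nonneg T)
  _ = ‖T‖ := mul_one _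

lemma ccOp_nonneg : 0 ≤ ccOp 𝕜 T := by
  have hmem : (0 : ℝ) ∈ {r | ∃ x : ℕ → X, (∀ k, x k ∈ closedBall (0 : X) 1) ∧
      WeaklyCauchy 𝕜 x ∧ r = caSeq fun k => T (x k)} := by
    refine ⟨fun _ => 0, fun _ => mem_closedBall_self zero_le_one, fun φ => ?_, ?_⟩
    · exact cauchySeq_const _
    · have : ∀ n : ℕ, (⨆ p : {p : ℕ × ℕ // n ≤ p.1 ∧ n ≤ p.2},
          ‖T (0 : X) - T (0 : X)‖) = 0 := by
        intro n
        haveI : Nonempty {p : ℕ × ℕ // n ≤ p.1 ∧ n ≤ p.2} := ⟨⟨(n, n), le_rfl, le_rfl⟩⟩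
        simp
      unfold caSeq
      simp only [this, ciInf_const]
  exact le_csSup (ccOp_set_bddAbove T) hmem

lemma ccDP_nonneg : 0 ≤ ccDP 𝕜 T := by
  have him : T '' ({0} : Set X) = ({0} : Set Y) := by
    rw [Set.image_singleton, map_zero]
  have hchi : chi0D dist (T '' ({0} : Set X)) = 0 := by
    rw [him]
    have hset : {r | ∃ F : Set Y, F ⊆ ({0} : Set Y) ∧ F.Finite ∧ F.Nonempty ∧
        r = hdD dist ({0} : Set Y) F} = {0} := by
      ext r
      constructor
      · rintro ⟨F, hsub, _, hne, rfl⟩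
        have hF : F = ({0} : Set Y) := hne.subset_singleton_iff.mp hsub
        subst hF
        have : hdD dist ({0} : Set Y) ({0} : Set Y) = 0 := by
          unfold hdD
          rw [ciSup_unique, ciInf_unique]
          simp
        simp [this]
      · rintro rfl
        refine ⟨{0}, le_rfl, Set.finite_singleton _, Set.singleton_nonempty _, ?_⟩
        unfold hdD
        rw [ciSup_unique, ciInf_unique]
        simp
    unfold chi0D
    rw [hset, csInf_singleton]
  have hmem : (0 : ℝ) ∈ {r | ∃ L : Set X, L.Nonempty ∧ L ⊆ closedBall (0 : X) 1 ∧
      IsWeaklyCompact 𝕜 L ∧ r = chi0D dist (T '' L)} := by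
    refine ⟨{0}, Set.singleton_nonempty _, ?_, ?_, hchi.symm⟩
    · simp [Set.singleton_subset_iff]
    · unfold IsWeaklyCompact
      rw [Set.image_singleton]
      exact isCompact_singleton
  exact le_csSup (ccDP_set_bddAbove T) hmem

end SetBounds
section Dir1

variable {𝕜 : Type*} [RCLike 𝕜] {X Y : Type*} [NormedAddCommGroup X] [NormedSpace 𝕜 X]
  [NormedAddCommGroup Y] [NormedSpace 𝕜 Y] (T : X →L[𝕜] Y)

lemma chi0D_le_ccOp {L : Set X} (hLne : L.Nonempty) (hLball : L ⊆ closedBall (0 : X) 1)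
    (hLcpt : IsWeaklyCompact 𝕜 L) : chi0D dist (T '' L) ≤ ccOp 𝕜 T := by
  classical
  by_contra hlt
  push_neg at hlt
  set c : ℝ := (ccOp 𝕜 T + chi0D dist (T '' L)) / 2 with hc
  have hc1 : ccOp 𝕜 T < c := by unfold c; linarith
  have hc2 : c < chi0D dist (T '' L) := by unfold c; linarith
  -- step: find a point of T '' L far from any finite subset of L
  have key : ∀ F : Finset X, ∃ z, z ∈ L ∧
      ((↑F ⊆ L ∧ F.Nonempty) → ∀ y ∈ F, c < ‖T z - T y‖) := by
    intro F
    by_cases hF : ↑F ⊆ L ∧ F.Nonempty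
    · have hmem : hdD dist (T '' L) (T '' (F : Set X)) ∈
          {r | ∃ G : Set Y, G ⊆ T '' L ∧ G.Finite ∧ G.Nonempty ∧ r = hdD dist (T '' L) G} :=
        ⟨T '' (F : Set X), Set.image_mono hF.1, (F.finite_toSet).image _,
          (hF.2.to_set).image _, rfl⟩
      have hlt2 : c < hdD dist (T '' L) (T '' (F : Set X)) :=
        lt_of_lt_of_le hc2 (csInf_le (chi0D_set_bddBelow _) hmem)
      haveI : Nonempty ↥(T '' L) := (hLne.image _).to_subtype
      obtain ⟨a, ha⟩ := exists_lt_of_lt_ciSup hlt2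
      obtain ⟨z, hzL, hza⟩ := a.2
      refine ⟨z, hzL, fun _ y hy => ?_⟩
      have hle : (⨅ b : ↥(T '' (F : Set X)), dist (a : Y) (b : Y)) ≤ dist (a : Y) (T y) :=
        ciInf_le (iInf_dist_bddBelow _ _) ⟨T y, Set.mem_image_of_mem T hy⟩
      have : c < dist (a : Y) (T y) := lt_of_lt_of_le ha hle
      rwa [← hza, dist_eq_norm] at this
    · obtain ⟨z₀, hz₀⟩ := hLne
      exact ⟨z₀, hz₀, fun h => absurd h hF⟩
  choose pick hpickL hpickFar using key
  -- build the sequence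
  set P : ℕ → Finset X := fun n => Nat.rec {pick ∅} (fun _ Pn => insert (pick Pn) Pn) n with hP
  have hP0 : P 0 = {pick ∅} := rfl
  have hPsucc : ∀ n, P (n + 1) = insert (pick (P n)) (P n) := fun n => rfl
  have hPL : ∀ n, ↑(P n) ⊆ L := by
    intro n
    induction n with
    | zero => simp [hP0, Set.singleton_subset_iff, hpickL]
    | succ n ih =>
      rw [hPsucc]
      intro y hy
      rcases Finset.mem_insert.mp hy with h | h
      · rw [h]; exact hpickL _
      · exact ih h
  have hPne : ∀ n, (P n).Nonempty := by
    intro n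
    induction n with
    | zero => rw [hP0]; exact Finset.singleton_nonempty _
    | succ n _ => rw [hPsucc]; exact Finset.insert_nonempty _ _
  set x : ℕ → X := fun n => pick (P n) with hx
  have hxL : ∀ n, x n ∈ L := fun n => hpickL _
  have hxP : ∀ j n, j < n → x j ∈ P n := by
    intro j n hjn
    induction n with
    | zero => omega
    | succ n ih =>
      rw [hPsucc]
      rcases Nat.lt_succ_iff_lt_or_eq.mp hjn with h | h
      · exact Finset.mem_insert_of_mem (ih h)
      · subst h; exact Finset.mem_insert_self _ _
  have hfar : ∀ j n, j < n → c < ‖T (x n) - T (x j)‖ := by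
    intro j n hjn
    exact hpickFar (P n) ⟨hPL n, hPne n⟩ (x j) (hxP j n hjn)
  -- extract weakly Cauchy subsequence
  obtain ⟨s, hs, hwc⟩ := exists_weaklyCauchy_subseq (𝕜 := 𝕜) hLcpt x hxL
  have hmem : caSeq (fun k => T ((x ∘ s) k)) ∈ {r | ∃ u : ℕ → X,
      (∀ k, u k ∈ closedBall (0 : X) 1) ∧ WeaklyCauchy 𝕜 u ∧ r = caSeq fun k => T (u k)} :=
    ⟨x ∘ s, fun k => hLball (hxL (s k)), hwc, rfl⟩
  have hTb : ∀ k, ‖T ((x ∘ s) k)‖ ≤ ‖T‖ := by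
    intro k
    exact norm_T_apply_le T hLball _ (Set.mem_image_of_mem T (hxL (s k)))
  have hca : c ≤ caSeq (fun k => T ((x ∘ s) k)) := by
    refine le_caSeq hTb fun n => ?_
    refine ⟨n + 1, n, Nat.le_succ n, le_rfl, ?_⟩
    exact (hfar (s n) (s (n + 1)) (hs (Nat.lt_succ_self n))).le
  have : c ≤ ccOp 𝕜 T := le_trans hca (le_csSup (ccOp_set_bddAbove T) hmem)
  linarith

end Dir1
section Dir2

variable {𝕜 : Type*} [RCLike 𝕜] {X Y : Type*} [NormedAddCommGroup X] [NormedSpace 𝕜 X]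
  [NormedAddCommGroup Y] [NormedSpace 𝕜 Y] (T : X →L[𝕜] Y)

lemma caSeq_le_two_ccDP {x : ℕ → X} (hxball : ∀ k, x k ∈ closedBall (0 : X) 1)
    (hxwc : WeaklyCauchy 𝕜 x) : caSeq (fun k => T (x k)) ≤ 2 * ccDP 𝕜 T := by
  classical
  by_contra hlt
  push_neg at hlt
  set c : ℝ := (2 * ccDP 𝕜 T + caSeq fun k => T (x k)) / 2 with hcdef
  have hc1 : 2 * ccDP 𝕜 T < c := by unfold c; linarith
  have hc2 : c < caSeq fun k => T (x k) := by unfold c; linarith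
  have hc0 : 0 ≤ c := le_trans (by have := ccDP_nonneg T; linarith) hc1.le
  have hxn : ∀ k, ‖x k‖ ≤ 1 := fun k => mem_closedBall_zero_iff.mp (hxball k)
  -- choose pairs
  have hpair : ∀ n, ∃ p : ℕ × ℕ, n ≤ p.1 ∧ n ≤ p.2 ∧ c < ‖T (x p.1) - T (x p.2)‖ := by
    intro n
    obtain ⟨k, l, hk, hl, h⟩ := exists_pair_of_lt_caSeq hc2 n
    exact ⟨(k, l), hk, hl, h⟩
  choose g hg1 hg2 hg3 using hpair
  set idx : ℕ → ℕ := fun m => Nat.rec 0 (fun _ nm => max (g nm).1 (g nm).2 + 1) m with hidx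
  have hidxsucc : ∀ m, idx (m + 1) = max (g (idx m)).1 (g (idx m)).2 + 1 := fun m => rfl
  set pr : ℕ → ℕ × ℕ := fun m => g (idx m) with hpr
  have hidx_ge : ∀ m, m ≤ idx m := by
    intro m
    induction m with
    | zero => exact Nat.zero_le _
    | succ m ih =>
      rw [hidxsucc]
      have := hg1 (idx m)
      omega
  have hprc : ∀ m, c < ‖T (x (pr m).1) - T (x (pr m).2)‖ := fun m => hg3 (idx m)
  have hpr1 : ∀ m, m ≤ (pr m).1 := fun m => le_trans (hidx_ge m) (hg1 (idx m))
  have hpr2 : ∀ m, m ≤ (pr m).2 := fun m => le_trans (hidx_ge m) (hg2 (idx m))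
  -- the weakly null sequence
  set z : ℕ → X := fun m => (2 : 𝕜)⁻¹ • (x (pr m).1 - x (pr m).2) with hz
  have hznorm : ∀ m, ‖z m‖ ≤ 1 := by
    intro m
    unfold z
    rw [norm_smul, norm_inv, RCLike.norm_ofNat]
    have h1 : ‖x (pr m).1 - x (pr m).2‖ ≤ 2 := by
      have := hxn (pr m).1; have := hxn (pr m).2
      have := norm_sub_le (x (pr m).1) (x (pr m).2)
      linarith
    calc (2 : ℝ)⁻¹ * ‖x (pr m).1 - x (pr m).2‖ ≤ 2⁻¹ * 2 := by
          exact mul_le_mul_of_nonneg_left h1 (by norm_num)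
    _ = 1 := by norm_num
  have hznull : ∀ ψ : StrongDual 𝕜 X, Tendsto (fun m => ψ (z m)) atTop (𝓝 0) := by
    intro ψ
    obtain ⟨t, ht⟩ := cauchySeq_tendsto_of_complete (hxwc ψ)
    have htop1 : Tendsto (fun m => (pr m).1) atTop atTop :=
      tendsto_atTop_mono hpr1 tendsto_id
    have htop2 : Tendsto (fun m => (pr m).2) atTop atTop :=
      tendsto_atTop_mono hpr2 tendsto_id
    have h1 : Tendsto (fun m => ψ (x (pr m).1)) atTop (𝓝 t) := ht.comp htop1
    have h2 : Tendsto (fun m => ψ (x (pr m).2)) atTop (𝓝 t) := ht.comp htop2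
    have hsub : Tendsto (fun m => ψ (x (pr m).1) - ψ (x (pr m).2)) atTop (𝓝 (t - t)) :=
      h1.sub h2
    rw [sub_self] at hsub
    have : Tendsto (fun m => (2 : 𝕜)⁻¹ * (ψ (x (pr m).1) - ψ (x (pr m).2))) atTop
        (𝓝 ((2 : 𝕜)⁻¹ * 0)) := hsub.const_mul _
    rw [mul_zero] at this
    convert this using 2 with m
    unfold z
    rw [map_smul, map_sub]
    simp [smul_eq_mul]
  set L : Set X := insert 0 (Set.range z) with hL
  have hLball : L ⊆ closedBall (0 : X) 1 := by
    rintro v hv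
    rcases hv with rfl | ⟨m, rfl⟩
    · exact mem_closedBall_self zero_le_one
    · exact mem_closedBall_zero_iff.mpr (hznorm m)
  have hLne : L.Nonempty := ⟨0, Set.mem_insert _ _⟩
  -- weak compactness of L
  have hBinj : Function.Injective ⇑(topDualPairing 𝕜 X).flip := by
    intro a b hab
    by_contra hne
    obtain ⟨ψ, _, hψ⟩ := exists_dual_vector 𝕜 (a - b) (norm_ne_zero_iff.mpr (sub_ne_zero.mpr hne))
    have h0 : ψ a = ψ b := by
      have := congrArg (fun f => f ψ) hab
      simpa using this
    rw [map_sub, h0, sub_self] at hψ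
    have : ‖a - b‖ = 0 := by
      have := hψ.symm
      exact_mod_cast this
    exact hne (sub_eq_zero.mp (norm_eq_zero.mp this))
  have hznull' : Tendsto (fun m => toWeakSpace 𝕜 X (z m)) atTop (𝓝 (toWeakSpace 𝕜 X 0)) := by
    refine (WeakBilin.tendsto_iff_forall_eval_tendsto (topDualPairing 𝕜 X).flip hBinj).mpr ?_
    intro ψ
    have := hznull ψ
    show Tendsto (fun m => ψ (z m)) atTop (𝓝 (ψ 0))
    rw [map_zero]
    exact this
  have hLcpt : IsWeaklyCompact 𝕜 L := by
    unfold IsWeaklyCompact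
    have him : toWeakSpace 𝕜 X '' L
        = insert (toWeakSpace 𝕜 X 0) (Set.range fun m => toWeakSpace 𝕜 X (z m)) := by
      unfold L
      rw [Set.image_insert_eq, ← Set.range_comp]
      rfl
    rw [him]
    exact hznull'.isCompact_insert_range
  -- the image set
  set w : ℕ → Y := fun m => T (z m) with hw
  have hwnorm : ∀ m, c / 2 < ‖w m‖ := by
    intro m
    show c / 2 < ‖T ((2 : 𝕜)⁻¹ • (x (pr m).1 - x (pr m).2))‖
    rw [map_smul, map_sub, norm_smul, norm_inv, RCLike.norm_ofNat]
    linarith [hprc m]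
  have hwnull : ∀ φ : StrongDual 𝕜 Y, Tendsto (fun m => φ (w m)) atTop (𝓝 0) := by
    intro φ
    exact hznull (φ.comp T)
  have himA : T '' L = insert 0 (Set.range w) := by
    unfold L
    rw [Set.image_insert_eq, ← Set.range_comp, map_zero]
    rfl
  have hwmem : ∀ m, w m ∈ T '' L := by
    intro m
    rw [himA]
    exact Set.mem_insert_of_mem _ ⟨m, rfl⟩
  -- lower bound for chi0D
  have hchi : c / 2 ≤ chi0D dist (T '' L) := by
    refine le_csInf ⟨hdD dist (T '' L) {0}, {0}, ?_, Set.finite_singleton _,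
        Set.singleton_nonempty _, rfl⟩ ?_
    · rw [himA]; exact Set.singleton_subset_iff.mpr (Set.mem_insert _ _)
    rintro r ⟨F, hFsub, hFfin, hFne, rfl⟩
    by_contra hr
    push_neg at hr
    -- every w m is within < c/2 of F
    obtain ⟨b₀, hb₀⟩ := hFne
    have hbdd : BddAbove (Set.range fun a : ↥(T '' L) => ⨅ b : ↥F, dist (a : Y) (b : Y)) := by
      refine ⟨‖T‖ + ‖b₀‖, ?_⟩
      rintro r ⟨a, rfl⟩
      refine le_trans (ciInf_le (iInf_dist_bddBelow _ _) ⟨b₀, hb₀⟩) ?_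
      calc dist (a : Y) b₀ ≤ ‖(a : Y)‖ + ‖b₀‖ := by
            rw [dist_eq_norm]; exact norm_sub_le _ _
      _ ≤ ‖T‖ + ‖b₀‖ := by
            have := norm_T_apply_le T hLball (a : Y) a.2
            linarith
    haveI : Nonempty ↥F := ⟨⟨b₀, hb₀⟩⟩
    have hnear : ∀ m, ∃ b ∈ F, dist (w m) b < c / 2 := by
      intro m
      have h1 : (⨅ b : ↥F, dist (w m) (b : Y)) ≤ hdD dist (T '' L) F :=
        le_ciSup hbdd ⟨w m, hwmem m⟩
      have h2 : (⨅ b : ↥F, dist (w m) (b : Y)) < c / 2 := lt_of_le_of_lt h1 hr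
      obtain ⟨b, hb⟩ := exists_lt_of_ciInf_lt h2
      exact ⟨(b : Y), b.2, hb⟩
    choose f hfF hfd using hnear
    haveI : Finite ↥F := hFfin.to_subtype
    set f' : ℕ → ↥F := fun m => ⟨f m, hfF m⟩ with hf'
    obtain ⟨f₀, hfib⟩ := Finite.exists_infinite_fiber f'
    have hMinf : (f' ⁻¹' {f₀}).Infinite := Set.infinite_coe_iff.mp hfib
    have hMnear : ∀ m ∈ f' ⁻¹' {f₀}, dist (w m) (f₀ : Y) < c / 2 := by
      intro m hm
      have : f' m = f₀ := hm
      have hval : f m = (f₀ : Y) := by rw [← this]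
      rw [← hval]
      exact hfd m
    have hf₀A : (f₀ : Y) ∈ insert 0 (Set.range w) := by
      rw [← himA]; exact hFsub f₀.2
    rcases hf₀A with hf0 | ⟨m₀, hm₀⟩
    · -- f₀ = 0
      obtain ⟨m, hm⟩ := hMinf.nonempty
      have h1 := hMnear m hm
      rw [hf0] at h1
      have h2 := hwnorm m
      rw [dist_zero_right] at h1
      linarith
    · -- f₀ = w m₀
      have hf₀norm : c / 2 < ‖(f₀ : Y)‖ := by rw [← hm₀]; exact hwnorm m₀
      have hf₀ne : (f₀ : Y) ≠ 0 := by
        intro h0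
        rw [h0, norm_zero] at hf₀norm
        linarith
      obtain ⟨φ, hφ1, hφ2⟩ := exists_dual_vector 𝕜 (f₀ : Y) (norm_ne_zero_iff.mpr hf₀ne)
      set ε : ℝ := (‖(f₀ : Y)‖ - c / 2) / 2 with hε
      have hεpos : 0 < ε := by unfold ε; linarith
      have hev : ∀ᶠ m in atTop, ‖φ (w m)‖ < ε := by
        have := (hwnull φ).norm
        rw [norm_zero] at this
        exact this.eventually_lt_const hεpos
      obtain ⟨N, hN⟩ := eventually_atTop.mp hev
      obtain ⟨m, hmM, hmN⟩ := hMinf.exists_gt N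
      have h1 : dist (w m) (f₀ : Y) < c / 2 := hMnear m hmM
      have h2 : ‖φ (w m)‖ < ε := hN m hmN.le
      have h3 : ‖(f₀ : Y)‖ = ‖φ (f₀ : Y)‖ := by
        rw [hφ2, RCLike.norm_ofReal, abs_of_nonneg (norm_nonneg _)]
      have h4 : ‖φ (f₀ : Y)‖ ≤ ‖φ ((f₀ : Y) - w m)‖ + ‖φ (w m)‖ := by
        have harr : (f₀ : Y) - w m + w m = (f₀ : Y) := by abel
        calc ‖φ (f₀ : Y)‖ = ‖φ ((f₀ : Y) - w m) + φ (w m)‖ := by rw [← map_add, harr]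
        _ ≤ _ := norm_add_le _ _
      have h5 : ‖φ ((f₀ : Y) - w m)‖ ≤ ‖(f₀ : Y) - w m‖ := by
        calc ‖φ ((f₀ : Y) - w m)‖ ≤ ‖φ‖ * ‖(f₀ : Y) - w m‖ := φ.le_opNorm _
        _ = ‖(f₀ : Y) - w m‖ := by rw [hφ1, one_mul]
      have h6 : ‖(f₀ : Y) - w m‖ < c / 2 := by
        rw [← dist_eq_norm, dist_comm]; exact h1
      have : ‖(f₀ : Y)‖ < c / 2 + ε := by
        rw [h3]
        calc ‖φ (f₀ : Y)‖ ≤ ‖φ ((f₀ : Y) - w m)‖ + ‖φ (w m)‖ := h4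
        _ < c / 2 + ε := by
            have := lt_of_le_of_lt h5 h6
            linarith
      unfold ε at this
      linarith
  -- conclude
  have hmem : chi0D dist (T '' L) ∈ {r | ∃ L' : Set X, L'.Nonempty ∧
      L' ⊆ closedBall (0 : X) 1 ∧ IsWeaklyCompact 𝕜 L' ∧ r = chi0D dist (T '' L')} :=
    ⟨L, hLne, hLball, hLcpt, rfl⟩
  have : c / 2 ≤ ccDP 𝕜 T := le_trans hchi (le_csSup (ccDP_set_bddAbove T) hmem)
  linarith

end Dir2

/-- For any bounded operator `T : X → Y` between Banach spaces:
`cc_DP(T) ≤ cc(T) ≤ 2·cc_DP(T)`. -/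
theorem ccDP_le_cc_le_two_ccDP
    {𝕜 : Type*} [RCLike 𝕜] {X Y : Type*}
    [NormedAddCommGroup X] [NormedSpace 𝕜 X] [CompleteSpace X]
    [NormedAddCommGroup Y] [NormedSpace 𝕜 Y] [CompleteSpace Y]
    (T : X →L[𝕜] Y) :
    ccDP 𝕜 T ≤ ccOp 𝕜 T ∧ ccOp 𝕜 T ≤ 2 * ccDP 𝕜 T := by
  constructor
  · refine Real.sSup_le ?_ (ccOp_nonneg T)
    rintro r ⟨L, hne, hball, hcpt, rfl⟩
    exact chi0D_le_ccOp T hne hball hcpt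
  · refine Real.sSup_le ?_ (by have := ccDP_nonneg T; linarith)
    rintro r ⟨x, hball, hwc, rfl⟩
    exact caSeq_le_two_ccDP T hball hwc
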